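/- Let F be a field of characteristic zero, n ≥ 1, and k ≥ 1 a natural number. If f ∈ F[x₁, …, xₙ] is nonzero and the dimension over F of the partial-derivative space of f is at most k, then f has a monomial x^e with nonzero coefficient whose cone-size satisfies ∏_{i=1}^{n} (eᵢ + 1) ≤ k. -/

import Mathlib

/-- The iterated partial derivative operator `∂^e = ∂₁^{e₁} ∘ ⋯ ∘ ∂ₙ^{eₙ}` on
`F[x₁,…,xₙ]`, as an `F`-linear endomorphism. -/
noncomputable def iterPDeriv (F : Type*) [CommSemiring F] (n : ℕ) (e : Fin n → ℕ) :
    Module.End F (MvPolynomial (Fin n) F) :=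
  (List.ofFn fun i : Fin n =>
    ((MvPolynomial.pderiv i).toLinearMap : Module.End F (MvPolynomial (Fin n) F)) ^ (e i)).prod

open MvPolynomial Finsupp in
/-- Iterated single-variable derivative of a monomial. -/
lemma pderiv_pow_monomial {F : Type*} [CommSemiring F] {n : ℕ} (i : Fin n) (k : ℕ)
    (s : Fin n →₀ ℕ) (a : F) :
    (((MvPolynomial.pderiv i).toLinearMap : Module.End F (MvPolynomial (Fin n) F)) ^ k)
        (monomial s a) =
      if k ≤ s i then monomial (s - Finsupp.single i k) (a * (s i).descFactorial k) else 0 := by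
  induction k generalizing s a with
  | zero => simp
  | succ k ih =>
    rw [pow_succ, Module.End.mul_apply]
    have h1 : ((MvPolynomial.pderiv i).toLinearMap : Module.End F (MvPolynomial (Fin n) F))
        (monomial s a) = monomial (s - Finsupp.single i 1) (a * s i) := by
      simp [pderiv_monomial]
    rw [h1]
    rcases Nat.eq_zero_or_pos (s i) with h0 | hpos
    · rw [h0]
      simp only [Nat.cast_zero, mul_zero, map_zero, map_zero]
      rw [if_neg (by omega)]
    · obtain ⟨m, hm⟩ : ∃ m, s i = m + 1 := ⟨s i - 1, by omega⟩
      rw [ih]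
      have hsub : ((s - Finsupp.single i 1 : Fin n →₀ ℕ)) i = m := by
        simp [Finsupp.tsub_apply, Finsupp.single_apply, hm]
      rw [hsub]
      by_cases hk : k ≤ m
      · rw [if_pos hk, if_pos (by omega)]
        congr 1
        · rw [tsub_tsub, ← Finsupp.single_add, add_comm 1 k]
        · rw [hm, Nat.succ_descFactorial_succ]
          push_cast
          ring
      · rw [if_neg hk, if_neg (by omega)]

open MvPolynomial Finsupp in
lemma listProd_pderiv_monomial {F : Type*} [CommSemiring F] {n : ℕ} (e : Fin n → ℕ)
    (s : Fin n →₀ ℕ) (a : F) :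
    ∀ l : List (Fin n), l.Nodup →
      ((l.map fun i =>
          ((MvPolynomial.pderiv i).toLinearMap : Module.End F (MvPolynomial (Fin n) F)) ^ e i).prod)
          (monomial s a) =
        if ∀ i ∈ l, e i ≤ s i then
          monomial (s - ∑ i ∈ l.toFinset, Finsupp.single i (e i))
            (a * ((∏ i ∈ l.toFinset, (s i).descFactorial (e i) : ℕ) : F))
        else 0 := by
  intro l
  induction l with
  | nil => simp
  | cons h t ih =>
    intro hnd
    have hht : h ∉ t := (List.nodup_cons.mp hnd).1
    have htnd : t.Nodup := (List.nodup_cons.mp hnd).2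
    rw [List.map_cons, List.prod_cons, Module.End.mul_apply, ih htnd]
    by_cases hc : ∀ i ∈ t, e i ≤ s i
    · rw [if_pos hc]
      have hσh : (∑ i ∈ t.toFinset, Finsupp.single i (e i)) h = 0 := by
        rw [Finsupp.finset_sum_apply]
        refine Finset.sum_eq_zero fun i hi => ?_
        rw [Finsupp.single_apply, if_neg]
        intro hih
        exact hht (hih ▸ List.mem_toFinset.mp hi)
      have hsh : (s - ∑ i ∈ t.toFinset, Finsupp.single i (e i)) h = s h := by
        rw [Finsupp.tsub_apply, hσh, Nat.sub_zero]
      rw [pderiv_pow_monomial, hsh]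
      by_cases hh : e h ≤ s h
      · rw [if_pos hh, if_pos (by
          intro i hi
          rcases List.mem_cons.mp hi with rfl | hi
          · exact hh
          · exact hc i hi)]
        have htf : (h :: t).toFinset = insert h t.toFinset := by simp
        rw [htf]
        congr 1
        · rw [Finset.sum_insert (by simpa using hht), tsub_tsub, add_comm]
        · rw [Finset.prod_insert (by simpa using hht)]
          push_cast
          ring
      · rw [if_neg hh, if_neg (by
          intro hall
          exact hh (hall h (List.mem_cons_self (a := h) (l := t))))]
    · rw [if_neg hc, map_zero, if_neg (by
        intro hall
        exact hc fun i hi => hall i (List.mem_cons_of_mem h hi))]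

open MvPolynomial Finsupp in
/-- `iterPDeriv` of a monomial. -/
lemma iterPDeriv_monomial {F : Type*} [CommSemiring F] {n : ℕ} (d s : Fin n →₀ ℕ) (a : F) :
    iterPDeriv F n d (monomial s a) =
      if d ≤ s then
        monomial (s - d) (a * ((∏ i, (s i).descFactorial (d i) : ℕ) : F))
      else 0 := by
  have hsum : ∑ i ∈ (List.finRange n).toFinset, Finsupp.single i (d i) = d := by
    rw [List.toFinset_finRange]
    ext j
    simp [Finsupp.single_apply]
  have := listProd_pderiv_monomial (F := F) (fun i => d i) s a (List.finRange n)
    (List.nodup_finRange n)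
  rw [iterPDeriv, List.ofFn_eq_map, this, hsum, List.toFinset_finRange]
  by_cases hds : d ≤ s
  · rw [if_pos (fun i _ => Finsupp.le_def.mp hds i), if_pos hds]
  · rw [if_neg (fun hall => hds (Finsupp.le_def.mpr fun i => hall i (List.mem_finRange i))),
      if_neg hds]

/-- **Small partial-derivative space yields a low-cone monomial.** Over a
characteristic-zero field, if `f ≠ 0` and the span of all iterated partial
derivatives of `f` has dimension at most `k`, then `f` has a monomial with
nonzero coefficient whose cone-size `∏ (eᵢ + 1)` is at most `k`. -/
theorem low_partial_derivative_space_has_low_cone_monomial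
    (F : Type*) [Field F] [CharZero F] (n k : ℕ) (hn : 1 ≤ n) (hk : 1 ≤ k)
    (f : MvPolynomial (Fin n) F) (hf : f ≠ 0)
    (hdim : Module.rank F
        (Submodule.span F {g : MvPolynomial (Fin n) F |
          ∃ e : Fin n → ℕ, g = iterPDeriv F n e f}) ≤ (k : Cardinal)) :
    ∃ e : Fin n →₀ ℕ, MvPolynomial.coeff e f ≠ 0 ∧ (∏ i, (e i + 1)) ≤ k := by
  classical
  open MvPolynomial Finsupp in
  -- choose `e` : lex-maximal element of the support of `f`
  obtain ⟨e, hesupp, hemax⟩ := Finset.exists_max_image f.support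
    (fun s => toLex s) (MvPolynomial.support_nonempty.mpr hf)
  have hce : MvPolynomial.coeff e f ≠ 0 := MvPolynomial.mem_support_iff.mp hesupp
  refine ⟨e, hce, ?_⟩
  -- key coefficient computations
  have hcoeff : ∀ d : Fin n →₀ ℕ, ∀ m : Fin n →₀ ℕ,
      MvPolynomial.coeff m (iterPDeriv F n d f) =
        ∑ s ∈ f.support, (if d ≤ s ∧ s - d = m then
          MvPolynomial.coeff s f * ((∏ i, (s i).descFactorial (d i) : ℕ) : F) else 0) := by
    intro d m
    conv_lhs => rw [f.as_sum, map_sum]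
    rw [MvPolynomial.coeff_sum]
    refine Finset.sum_congr rfl fun s _ => ?_
    rw [iterPDeriv_monomial]
    by_cases hds : d ≤ s
    · rw [if_pos hds, MvPolynomial.coeff_monomial]
      by_cases hm : s - d = m
      · rw [if_pos hm, if_pos ⟨hds, hm⟩]
      · rw [if_neg hm, if_neg (fun h => hm h.2)]
    · rw [if_neg hds, MvPolynomial.coeff_zero, if_neg (fun h => hds h.1)]
  -- claim 1 : the coefficient of `e - d` in `∂^d f` is nonzero, for `d ≤ e`
  have claim1 : ∀ d : Fin n →₀ ℕ, d ≤ e →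
      MvPolynomial.coeff (e - d) (iterPDeriv F n d f) ≠ 0 := by
    intro d hde
    rw [hcoeff d (e - d), Finset.sum_eq_single e]
    · rw [if_pos ⟨hde, rfl⟩]
      refine mul_ne_zero hce ?_
      rw [Nat.cast_ne_zero]
      refine Finset.prod_ne_zero_iff.mpr fun i _ => ?_
      have := Finsupp.le_def.mp hde i
      simp only [ne_eq, Nat.descFactorial_eq_zero_iff_lt]
      omega
    · intro s _ hse
      rw [if_neg]
      rintro ⟨hds, hsd⟩
      exact hse (by
        have := congrArg (· + d) hsd
        simpa [tsub_add_cancel_of_le hds, tsub_add_cancel_of_le hde] using this)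
    · intro habs; exact absurd hesupp habs
  -- claim 2 : coefficients lex-above `e - d` vanish
  have claim2 : ∀ d : Fin n →₀ ℕ, d ≤ e → ∀ m : Fin n →₀ ℕ,
      toLex (e - d) < toLex m → MvPolynomial.coeff m (iterPDeriv F n d f) = 0 := by
    intro d hde m hm
    rw [hcoeff d m]
    refine Finset.sum_eq_zero fun s hs => ?_
    rw [if_neg]
    rintro ⟨hds, hsd⟩
    have hse : toLex s ≤ toLex e := hemax s hs
    have h1 : s = m + d := by
      have := congrArg (· + d) hsd
      simpa [tsub_add_cancel_of_le hds] using this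
    have h2 : e = (e - d) + d := (tsub_add_cancel_of_le hde).symm
    rw [h1, h2] at hse
    have : toLex m + toLex d ≤ toLex (e - d) + toLex d := hse
    exact absurd hm (not_lt.mpr (le_of_add_le_add_right this))
  -- the family of iterated derivatives indexed by `Iic e` is linearly independent
  set S : Set (MvPolynomial (Fin n) F) :=
    {g : MvPolynomial (Fin n) F | ∃ e : Fin n → ℕ, g = iterPDeriv F n e f} with hS
  set ι := {x : Fin n →₀ ℕ // x ∈ Finset.Iic e} with hι
  have hmemIic : ∀ d : ι, (d : Fin n →₀ ℕ) ≤ e := fun d => Finset.mem_Iic.mp d.2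
  set v : ι → MvPolynomial (Fin n) F := fun d => iterPDeriv F n (⇑(d : Fin n →₀ ℕ)) f with hv
  have hindep : LinearIndependent F v := by
    rw [linearIndependent_iff']
    intro t g hsum i hit
    by_contra hgi
    set T := t.filter (fun j => g j ≠ 0) with hT
    have hiT : i ∈ T := Finset.mem_filter.mpr ⟨hit, hgi⟩
    obtain ⟨j, hjT, hjmax⟩ := Finset.exists_max_image T
      (fun j => toLex (e - (j : Fin n →₀ ℕ))) ⟨i, hiT⟩
    have hjt : j ∈ t := (Finset.mem_filter.mp hjT).1
    have hgj : g j ≠ 0 := (Finset.mem_filter.mp hjT).2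
    have hc : MvPolynomial.coeff (e - (j : Fin n →₀ ℕ)) (∑ i ∈ t, g i • v i) = 0 := by
      rw [hsum]; rfl
    rw [MvPolynomial.coeff_sum] at hc
    have hc2 : ∑ i ∈ T, MvPolynomial.coeff (e - (j : Fin n →₀ ℕ)) (g i • v i) = 0 := by
      rw [← hc, hT]
      refine Finset.sum_filter_of_ne fun x hx hne hgx => ?_
      rw [hgx, zero_smul, MvPolynomial.coeff_zero] at hne
      exact hne rfl
    rw [Finset.sum_eq_single j] at hc2
    · rw [MvPolynomial.coeff_smul, smul_eq_mul] at hc2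
      exact hgj ((mul_eq_zero.mp hc2).resolve_right (claim1 _ (hmemIic j)))
    · intro b hbT hbj
      rw [MvPolynomial.coeff_smul, smul_eq_mul]
      have hlt : toLex (e - (b : Fin n →₀ ℕ)) < toLex (e - (j : Fin n →₀ ℕ)) := by
        refine lt_of_le_of_ne (hjmax b hbT) fun heq => hbj ?_
        have heq' : e - (b : Fin n →₀ ℕ) = e - (j : Fin n →₀ ℕ) := toLex.injective heq
        have : (b : Fin n →₀ ℕ) = (j : Fin n →₀ ℕ) := by
          have h1 := tsub_tsub_cancel_of_le (hmemIic b)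
          have h2 := tsub_tsub_cancel_of_le (hmemIic j)
          rw [← h1, ← h2, heq']
        exact Subtype.ext this
      rw [claim2 _ (hmemIic b) _ hlt, mul_zero]
    · intro h; exact absurd hjT h
  -- pass to the span and compare cardinalities
  have hmem : ∀ d : ι, v d ∈ Submodule.span F S :=
    fun d => Submodule.subset_span ⟨⇑(d : Fin n →₀ ℕ), rfl⟩
  set v' : ι → (Submodule.span F S) := fun d => ⟨v d, hmem d⟩ with hv'
  have hindep' : LinearIndependent F v' :=
    LinearIndependent.of_comp (Submodule.span F S).subtype hindep
  have hcard := hindep'.cardinal_lift_le_rank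
  have hlift : Cardinal.lift.{0} (Module.rank F (Submodule.span F S)) ≤
      Cardinal.lift.{0} ((k : Cardinal)) := Cardinal.lift_le.mpr hdim
  have hcard2 := hcard.trans hlift
  rw [Cardinal.mk_coe_finset] at hcard2
  simp only [Cardinal.lift_natCast] at hcard2
  have hcard3 : (Finset.Iic e).card ≤ k := by exact_mod_cast hcard2
  have hcardeq : (Finset.Iic e).card = ∏ i ∈ e.support, (e i + 1) := by
    rw [Finsupp.card_Iic]; simp [Nat.card_Iic]
  have hprod : ∏ i, (e i + 1) = ∏ i ∈ e.support, (e i + 1) := by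
    refine (Finset.prod_subset (Finset.subset_univ _) fun i _ hi => ?_).symm
    simp [Finsupp.notMem_support_iff.mp hi]
  rw [hprod, ← hcardeq]
  exact hcard3
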